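/- Replaceability for the PNS(k) lower bounds: for an arbitrary assignment v : {1,…,k} → {1,…,n} of target outcome values, the probability P(⋂_{j=1}^{k} {Y_j = v(j)}) satisfies: (i) P(⋂_{j=1}^{k} {Y_j = v(j)}) ≥ 0; (ii) P(⋂_{j=1}^{k} {Y_j = v(j)}) ≥ Σ_{j=1}^{k} P(Y_j = v(j)) − k + 1; (iii) for every i ∈ {1,…,k}, P(⋂_{j=1}^{k} {Y_j = v(j)}) ≥ Σ_{1 ≤ j ≤ k, j ≠ i} [ P(Y_j = v(j)) + P(X = j) − P(X = j, Y = v(j)) ] + P(X = i, Y = v(i)) − k + 1. -/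

import Mathlib

open MeasureTheory

lemma frechet_aux {Ω : Type*} [MeasurableSpace Ω] (P : Measure Ω) [IsProbabilityMeasure P]
    (s : Finset ℕ) (f : ℕ → Set Ω) (hf : ∀ j ∈ s, MeasurableSet (f j)) :
    (∑ j ∈ s, (P (f j)).toReal) - (s.card : ℝ) + 1 ≤ (P (⋂ j ∈ s, f j)).toReal := by
  have hIm : MeasurableSet (⋂ j ∈ s, f j) :=
    MeasurableSet.biInter s.countable_toSet (fun j hj => hf j hj)
  have hcompl : (⋂ j ∈ s, f j)ᶜ = ⋃ j ∈ s, (f j)ᶜ := by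
    simp [Set.compl_iInter]
  have hub : (P ((⋂ j ∈ s, f j)ᶜ)).toReal ≤ ∑ j ∈ s, (P ((f j)ᶜ)).toReal := by
    rw [hcompl]
    calc (P (⋃ j ∈ s, (f j)ᶜ)).toReal ≤ (∑ j ∈ s, P ((f j)ᶜ)).toReal := by
          apply ENNReal.toReal_mono
          · exact (ENNReal.sum_ne_top).2 (fun j _ => measure_ne_top P _)
          · exact measure_biUnion_finset_le s _
      _ = ∑ j ∈ s, (P ((f j)ᶜ)).toReal :=
          ENNReal.toReal_sum (fun j _ => measure_ne_top P _)
  have h1 : (P ((⋂ j ∈ s, f j)ᶜ)).toReal = 1 - (P (⋂ j ∈ s, f j)).toReal := by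
    rw [prob_compl_eq_one_sub hIm, ENNReal.toReal_sub_of_le prob_le_one ENNReal.one_ne_top,
      ENNReal.toReal_one]
  have h2 : ∑ j ∈ s, (P ((f j)ᶜ)).toReal = (s.card : ℝ) - ∑ j ∈ s, (P (f j)).toReal := by
    have : ∀ j ∈ s, (P ((f j)ᶜ)).toReal = 1 - (P (f j)).toReal := by
      intro j hj
      rw [prob_compl_eq_one_sub (hf j hj), ENNReal.toReal_sub_of_le prob_le_one ENNReal.one_ne_top,
        ENNReal.toReal_one]
    rw [Finset.sum_congr rfl this, Finset.sum_sub_distrib, Finset.sum_const, nsmul_eq_mul, mul_one]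
  rw [h1, h2] at hub
  linarith

theorem pns_k_lower_bounds_replaceability
    {Ω : Type*} [MeasurableSpace Ω] (P : Measure Ω) [IsProbabilityMeasure P]
    (n k : ℕ) (hk1 : 1 ≤ k) (hkn : k ≤ n)
    (X : Ω → ℕ) (Y : ℕ → Ω → ℕ) (Yobs : Ω → ℕ)
    (hX : Measurable X) (hY : ∀ j, Measurable (Y j))
    (hXr : ∀ ω, X ω ∈ Finset.Icc 1 n)
    (hYr : ∀ j ω, Y j ω ∈ Finset.Icc 1 n)
    (hcons : ∀ ω, Yobs ω = Y (X ω) ω)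
    (v : ℕ → ℕ) (hv : ∀ j ∈ Finset.Icc 1 k, v j ∈ Finset.Icc 1 n) :
    0 ≤ (P (⋂ j ∈ Finset.Icc 1 k, {ω | Y j ω = v j})).toReal ∧
    (∑ j ∈ Finset.Icc 1 k, (P {ω | Y j ω = v j}).toReal) - (k : ℝ) + 1 ≤ (P (⋂ j ∈ Finset.Icc 1 k, {ω | Y j ω = v j})).toReal ∧
    ∀ i ∈ Finset.Icc 1 k,
      (∑ j ∈ (Finset.Icc 1 k).erase i,
          ((P {ω | Y j ω = v j}).toReal + (P {ω | X ω = j}).toReal - (P {ω | X ω = j ∧ Yobs ω = v j}).toReal))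
        + (P {ω | X ω = i ∧ Yobs ω = v i}).toReal - (k : ℝ) + 1 ≤ (P (⋂ j ∈ Finset.Icc 1 k, {ω | Y j ω = v j})).toReal := by
  set s := Finset.Icc 1 k with hs
  have hcard : (s.card : ℝ) = (k : ℝ) := by
    simp [hs, Nat.card_Icc]
  set A : ℕ → Set Ω := fun j => {ω | Y j ω = v j} with hA
  have hAm : ∀ j, MeasurableSet (A j) := fun j => (hY j) (measurableSet_singleton (v j))
  have hXm : ∀ j, MeasurableSet {ω | X ω = j} := fun j => hX (measurableSet_singleton j)
  -- consistency: joint events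
  have hjoint : ∀ j, {ω | X ω = j ∧ Yobs ω = v j} = {ω | X ω = j} ∩ A j := by
    intro j
    ext ω
    simp only [Set.mem_setOf_eq, Set.mem_inter_iff, hA]
    constructor
    · rintro ⟨hx, hy⟩; subst hx; exact ⟨rfl, (hcons ω).symm.trans hy⟩
    · rintro ⟨hx, hy⟩; subst hx; exact ⟨rfl, (hcons ω).trans hy⟩
  refine ⟨ENNReal.toReal_nonneg, ?_, ?_⟩
  · have := frechet_aux P s A (fun j _ => hAm j)
    rw [hcard] at this
    exact this
  · intro i hi
    -- define the family g
    set g : ℕ → Set Ω := fun j => if j = i then {ω | X ω = i} ∩ A i else A j ∪ {ω | X ω = j} with hg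
    have hgm : ∀ j ∈ s, MeasurableSet (g j) := by
      intro j _
      by_cases h : j = i <;> simp [hg, h]
      · exact (hXm i).inter (hAm i)
      · exact (hAm j).union (hXm j)
    have hsub : (⋂ j ∈ s, g j) ⊆ ⋂ j ∈ s, A j := by
      intro ω hω
      simp only [Set.mem_iInter] at hω ⊢
      have hXi : X ω = i := by
        have := hω i hi
        simp [hg] at this
        exact this.1
      intro j hj
      by_cases h : j = i
      · subst h
        have := hω j hj
        simp [hg] at this
        exact this.2
      · have := hω j hj
        simp [hg, h] at this
        rcases this with h1 | h2
        · exact h1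
        · exact absurd (h2.symm.trans hXi) h
    have hmono : (P (⋂ j ∈ s, g j)).toReal ≤ (P (⋂ j ∈ s, A j)).toReal :=
      ENNReal.toReal_mono (measure_ne_top P _) (measure_mono hsub)
    have hfre := frechet_aux P s g hgm
    rw [hcard] at hfre
    -- rewrite the sum over s as term at i plus sum over erase
    have hsplit : ∑ j ∈ s, (P (g j)).toReal
        = (P ({ω | X ω = i} ∩ A i)).toReal + ∑ j ∈ s.erase i, (P (g j)).toReal := by
      rw [← Finset.add_sum_erase s _ hi]
      simp [hg]
    have hterm : ∀ j ∈ s.erase i,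
        (P (A j)).toReal + (P {ω | X ω = j}).toReal - (P {ω | X ω = j ∧ Yobs ω = v j}).toReal
          = (P (g j)).toReal := by
      intro j hj
      have hne : j ≠ i := (Finset.mem_erase.1 hj).1
      have hinter := measure_union_add_inter (μ := P) (A j) (hXm j)
      have h1 : (P (A j ∪ {ω | X ω = j})).toReal + (P (A j ∩ {ω | X ω = j})).toReal
          = (P (A j)).toReal + (P {ω | X ω = j}).toReal := by
        rw [← ENNReal.toReal_add (measure_ne_top P _) (measure_ne_top P _),
          ← ENNReal.toReal_add (measure_ne_top P _) (measure_ne_top P _), hinter]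
      have hgj : g j = A j ∪ {ω | X ω = j} := if_neg hne
      rw [hjoint j, hgj, Set.inter_comm]
      linarith
    rw [Finset.sum_congr rfl hterm, hjoint i]
    calc ∑ j ∈ s.erase i, (P (g j)).toReal + (P ({ω | X ω = i} ∩ A i)).toReal - (k:ℝ) + 1
        = (P ({ω | X ω = i} ∩ A i)).toReal + ∑ j ∈ s.erase i, (P (g j)).toReal - (k:ℝ) + 1 := by ring
      _ = ∑ j ∈ s, (P (g j)).toReal - (k:ℝ) + 1 := by rw [hsplit]
      _ ≤ (P (⋂ j ∈ s, g j)).toReal := hfre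
      _ ≤ (P (⋂ j ∈ s, A j)).toReal := hmono
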